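/- Let S be a supercharacter theory of a finite group G, let N be S-normal, and let g ∈ G. Then g ∈ U(S | N) if and only if every S-character χ with g ∉ ker χ vanishes on G∖N. -/

import Mathlib

open scoped BigOperators Pointwise

/-- `f : G → ℂ` is an irreducible character of `G`. -/
def IsIrrChar (G : Type) [Group G] [Fintype G] (f : G → ℂ) : Prop :=
  ∃ V : FDRep ℂ G, CategoryTheory.Simple V ∧ V.character = f

/-- A supercharacter theory of a finite group `G` (Diaconis–Isaacs): a partition
`parts` of the set of irreducible characters of `G` together with a partition of `G`
into `S`-classes (`cls g` is the class of `g`), such that `{1}` is a class, the number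
of parts equals the number of classes, and each supercharacter
`σ_X = ∑ χ ∈ X, χ(1)·χ` is constant on every class. -/
structure SCT (G : Type) [Group G] [Fintype G] where
  parts : Finset (Finset (G → ℂ))
  cls : G → Set G
  parts_cover : ∀ f : G → ℂ, IsIrrChar G f ↔ ∃ X ∈ parts, f ∈ X
  parts_disj : ∀ X ∈ parts, ∀ Y ∈ parts, X ≠ Y → Disjoint X Y
  parts_nonempty : ∀ X ∈ parts, X.Nonempty
  mem_cls : ∀ g : G, g ∈ cls g
  cls_eq : ∀ g h : G, h ∈ cls g → cls h = cls g
  cls_one : cls (1 : G) = {1}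
  card_eq : parts.card = Nat.card (Set.range cls)
  const : ∀ X ∈ parts, ∀ g h : G, h ∈ cls g →
    (∑ χ ∈ X, χ 1 * χ h) = (∑ χ ∈ X, χ 1 * χ g)

variable {G : Type} [Group G] [Fintype G]

namespace SCT

/-- The supercharacter attached to a part `X`. -/
noncomputable def superchar (_S : SCT G) (X : Finset (G → ℂ)) : G → ℂ := fun g => ∑ χ ∈ X, χ 1 * χ g

/-- The set `Irr(S)` of `S`-characters. -/
def Irr (S : SCT G) : Set (G → ℂ) := {f | ∃ X ∈ S.parts, f = S.superchar X}

end SCT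

/-- The kernel of a character-like function `f : G → ℂ`. -/
def charKer (f : G → ℂ) : Subgroup G where
  carrier := {g | ∀ h, f (g * h) = f h}
  one_mem' := by intro h; simp
  mul_mem' := by intro a b ha hb h; rw [mul_assoc, ha, hb]
  inv_mem' := by
    intro a ha h
    have := ha (a⁻¹ * h)
    rw [mul_inv_cancel_left] at this
    exact this.symm

namespace SCT

/-- `[H,S]`, the subgroup generated by the `g⁻¹k` with `g ∈ H`, `k ∈ Cl_S(g)`. -/
def comm (S : SCT G) (H : Subgroup G) : Subgroup G :=
  Subgroup.closure {x | ∃ g ∈ H, ∃ k ∈ S.cls g, x = g⁻¹ * k}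

/-- `[G,S]`. -/
def derived (S : SCT G) : Subgroup G := S.comm ⊤

/-- `Irr(S | N)`: the `S`-characters whose kernel does not contain `N`. -/
def IrrRel (S : SCT G) (N : Subgroup G) : Set (G → ℂ) :=
  {f | f ∈ S.Irr ∧ ¬ N ≤ charKer f}

/-- `g` is an `S`-Camina element: all of `Irr(S | [G,S])` vanishes at `g`. -/
def IsCaminaElt (S : SCT G) (g : G) : Prop :=
  ∀ f ∈ S.IrrRel S.derived, f g = 0

/-- `N` is `S`-normal: a union of `S`-classes. -/
def IsNormal (S : SCT G) (N : Subgroup G) : Prop :=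
  ∀ g ∈ N, S.cls g ⊆ N

/-- `(G,N)` is a generalised `S`-Camina pair. -/
def IsGCP (S : SCT G) (N : Subgroup G) : Prop :=
  S.IsNormal N ∧ ∀ g : G, g ∉ N → S.IsCaminaElt g

/-- The set `Z(S)` of elements with singleton `S`-class. -/
def centerSet (S : SCT G) : Set G := {g | S.cls g = {g}}

/-- The vanishing-off subgroup `V(S | N)`. -/
def V (S : SCT G) (N : Subgroup G) : Subgroup G :=
  Subgroup.closure {g | ∃ f ∈ S.IrrRel N, f g ≠ 0}

/-- `V(S) = V(S | [G,S])`. -/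
def VS (S : SCT G) : Subgroup G := S.V S.derived

/-- `U(S | N)`: the product of all `S`-normal subgroups `H` with `V(S | H) ≤ N`. -/
def U (S : SCT G) (N : Subgroup G) : Subgroup G :=
  ⨆ (H : Subgroup G) (_ : S.IsNormal H ∧ S.V H ≤ N), H

/-- The upper `S`-central series: `ζ_0 = 1` and `ζ_{i+1}/ζ_i = Z(S^{G/ζ_i})`,
i.e. `ζ_{i+1}` consists of the `g` whose `S`-class maps onto the single coset `gζ_i`. -/
def zeta (S : SCT G) : ℕ → Subgroup G
  | 0 => ⊥
  | i + 1 => Subgroup.closure {g | ∀ k ∈ S.cls g, g⁻¹ * k ∈ S.zeta i}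

/-- The lower `S`-central series `γ_1 = G`, `γ_{i+1} = [γ_i, S]` (with `γ_0 := G`). -/
def gamma (S : SCT G) : ℕ → Subgroup G
  | 0 => ⊤
  | 1 => ⊤
  | n + 2 => S.comm (S.gamma (n + 1))

/-- The series `V_1(S) = V(S)`, `V_{i+1}(S) = [V_i(S), S]` (with `V_0 := V(S)`). -/
def Vseq (S : SCT G) : ℕ → Subgroup G
  | 0 => S.VS
  | 1 => S.VS
  | n + 2 => S.comm (S.Vseq (n + 1))

/-- `G` is a `VZ(S)`-group: every member of `Irr(S | [G,S])` vanishes off `Z(S)`. -/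
def IsVZ (S : SCT G) : Prop :=
  ∀ f ∈ S.IrrRel S.derived, ∀ g : G, g ∉ S.centerSet → f g = 0

end SCT


open Polynomial in
lemma matRootsPow {n m : ℕ} (M : Matrix (Fin n) (Fin n) ℂ)
    (hM : M ^ m = 1) : ∀ r ∈ M.charpoly.roots, r ^ m = 1 := by
  intro r hr
  have hroot : M.charpoly.IsRoot r := Polynomial.isRoot_of_mem_roots hr
  have hdet : (Matrix.diagonal (fun _ : Fin n => r) - M).det = 0 := by
    rw [Polynomial.IsRoot, Matrix.charpoly, ← Polynomial.coe_evalRingHom,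
      RingHom.map_det] at hroot
    convert hroot using 2
    ext i j
    by_cases h : i = j <;>
      simp [h, Matrix.charmatrix_apply, Matrix.diagonal, Matrix.map_apply]
  obtain ⟨v, hv, hveq⟩ := (Matrix.exists_mulVec_eq_zero_iff).mpr hdet
  have hMv : M.mulVec v = r • v := by
    have := hveq
    rw [Matrix.sub_mulVec, sub_eq_zero] at this
    rw [← this]
    ext i
    simp [Matrix.mulVec_diagonal]
  have hpow : ∀ k, (M ^ k).mulVec v = r ^ k • v := by
    intro k
    induction k with
    | zero => simp [Matrix.one_mulVec]
    | succ k ih =>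
        rw [pow_succ', pow_succ', ← Matrix.mulVec_mulVec, ih, Matrix.mulVec_smul, hMv,
          smul_smul, mul_comm]
  have h1 : (1 : ℂ) • v = (r ^ m) • v := by
    rw [← hpow, hM, Matrix.one_mulVec, one_smul]
  obtain ⟨i, hi⟩ := Function.ne_iff.mp hv
  have h2 := congrFun h1 i
  simp only [Pi.smul_apply, smul_eq_mul, one_mul] at h2
  rcases mul_eq_mul_right_iff.mp (h2.symm.trans (one_mul (v i)).symm) with h | h
  · exact h
  · exact absurd h hi

open Polynomial in
lemma matEqOne {n m : ℕ} (hm : 0 < m) (M : Matrix (Fin n) (Fin n) ℂ)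
    (hM : M ^ m = 1) (h1 : ∀ r ∈ M.charpoly.roots, r = 1) : M = 1 := by
  rcases Nat.eq_zero_or_pos n with hn | hn
  · subst hn
    haveI : IsEmpty (Fin 0) := Fin.isEmpty
    exact Subsingleton.elim M 1
  haveI : Nonempty (Fin n) := ⟨⟨0, hn⟩⟩
  have hmonic := M.charpoly_monic
  have hdeg : M.charpoly.natDegree = n := by
    rw [Matrix.charpoly_natDegree_eq_dim, Fintype.card_fin]
  have hsplits : M.charpoly.Splits := IsAlgClosed.splits _
  have hcard : M.charpoly.roots.card = n := by
    have h4 := Polynomial.splits_iff_card_roots.mp hsplits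
    rw [hdeg] at h4
    exact h4
  have hroots : M.charpoly.roots = Multiset.replicate n 1 :=
    Multiset.eq_replicate.mpr ⟨hcard, h1⟩
  have hcp : M.charpoly = (X - C 1) ^ n := by
    have h2 := hsplits.eq_prod_roots_of_monic hmonic
    rw [hroots] at h2
    simpa [Multiset.map_replicate, Multiset.prod_replicate] using h2
  have hCH : (M - 1) ^ n = 0 := by
    have h3 := M.aeval_self_charpoly
    rw [hcp, map_pow, map_sub, aeval_X, aeval_C, map_one] at h3
    exact h3
  have hint : IsIntegral ℂ M := ⟨M.charpoly, hmonic, by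
    rw [← Polynomial.aeval_def]; exact M.aeval_self_charpoly⟩
  set q := minpoly ℂ M with hq
  have hdvd1 : q ∣ (X - C 1) ^ n := minpoly.dvd ℂ M (by
    rw [map_pow, map_sub, aeval_X, aeval_C, map_one]; exact hCH)
  have hdvd2 : q ∣ X ^ m - C 1 := minpoly.dvd ℂ M (by
    rw [map_sub, map_pow, aeval_X, aeval_C, map_one, hM, sub_self])
  have hsep : (X ^ m - C 1 : ℂ[X]).Separable := by
    simpa using Polynomial.separable_X_pow_sub_C (1 : ℂ)
      (by exact_mod_cast hm.ne') one_ne_zero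
  have hqsf : Squarefree q := hsep.squarefree.squarefree_of_dvd hdvd2
  have hprime : Prime (X - C 1 : ℂ[X]) := Polynomial.prime_X_sub_C 1
  obtain ⟨i, hi, hassoc⟩ := (dvd_prime_pow hprime n).mp hdvd1
  have hile : i ≤ 1 := by
    by_contra hcon
    push_neg at hcon
    have : (X - C 1 : ℂ[X]) * (X - C 1) ∣ q := by
      have : (X - C 1 : ℂ[X]) ^ 2 ∣ (X - C 1) ^ i := pow_dvd_pow _ hcon
      rw [sq] at this
      exact this.trans hassoc.symm.dvd
    exact hprime.not_unit (hqsf _ this)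
  have hine : i ≠ 0 := by
    intro h0
    rw [h0, pow_zero] at hassoc
    exact (minpoly.not_isUnit ℂ M) (associated_one_iff_isUnit.mp hassoc)
  have hq1 : q = X - C 1 := by
    interval_cases i
    · exact absurd rfl hine
    · rw [pow_one] at hassoc
      exact Polynomial.eq_of_monic_of_associated (minpoly.monic hint)
        (Polynomial.monic_X_sub_C 1) hassoc
  have h5 := minpoly.aeval ℂ M
  rw [← hq, hq1, map_sub, aeval_X, aeval_C, map_one, sub_eq_zero] at h5
  exact h5

variable {G : Type} [Group G] [Fintype G]

lemma charKey (V : FDRep ℂ G) (g : G) :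
    (V.character g).re ≤ (Module.finrank ℂ V : ℝ) ∧
      ((V.character g).re = (Module.finrank ℂ V : ℝ) →
        ∀ h, V.character (g * h) = V.character h) := by
  classical
  set n := Module.finrank ℂ V with hn
  let b := Module.finBasis ℂ V
  let e := LinearMap.toMatrixAlgEquiv b
  set M := e (V.ρ g) with hMdef
  set m := Fintype.card G with hm
  have hm0 : 0 < m := Fintype.card_pos
  have hMm : M ^ m = 1 := by
    rw [hMdef, ← map_pow, ← map_pow, pow_card_eq_one, map_one, map_one]
  have htr : V.character g = M.trace := by
    rw [FDRep.character, LinearMap.trace_eq_matrix_trace ℂ b]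
    rfl
  have hsplits : M.charpoly.Splits := IsAlgClosed.splits _
  have hcard : Multiset.card M.charpoly.roots = n := by
    have h4 := Polynomial.splits_iff_card_roots.mp hsplits
    rw [Matrix.charpoly_natDegree_eq_dim, Fintype.card_fin] at h4
    exact h4
  have hsum : V.character g = M.charpoly.roots.sum := by
    rw [htr, Matrix.trace_eq_sum_roots_charpoly]
  have habs : ∀ r ∈ M.charpoly.roots, ‖r‖ = 1 := by
    intro r hr
    have h5 := matRootsPow M hMm r hr
    have := congrArg norm h5
    rw [norm_pow, norm_one] at this
    have habs0 : (0:ℝ) ≤ ‖r‖ := norm_nonneg _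
    by_contra hne
    rcases lt_or_gt_of_ne hne with hlt | hgt
    · have h6 := pow_lt_one₀ habs0 hlt hm0.ne'
      rw [this] at h6
      exact absurd h6 (by norm_num)
    · have h6 := one_lt_pow₀ hgt hm0.ne'
      rw [this] at h6
      exact absurd h6 (by norm_num)
  have hre1 : ∀ r ∈ M.charpoly.roots, r.re ≤ 1 := fun r hr =>
    (Complex.re_le_norm r).trans (le_of_eq (habs r hr))
  have hresum : (V.character g).re = (M.charpoly.roots.map Complex.re).sum := by
    rw [hsum]
    exact map_multiset_sum Complex.reAddGroupHom _
  constructor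
  · rw [hresum]
    calc (M.charpoly.roots.map Complex.re).sum
        ≤ Multiset.card (M.charpoly.roots.map Complex.re) • (1 : ℝ) :=
          Multiset.sum_le_card_nsmul _ _ (by
            intro x hx
            obtain ⟨r, hr, rfl⟩ := Multiset.mem_map.mp hx
            exact hre1 r hr)
      _ = n := by rw [Multiset.card_map, hcard]; simp
  · intro heq h
    have hall : ∀ r ∈ M.charpoly.roots, r = (1 : ℂ) := by
      intro r hr
      have hn1 : 1 ≤ n := by
        rw [← hcard]
        exact Multiset.card_pos_iff_exists_mem.mpr ⟨r, hr⟩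
      have heq' : r.re + ((M.charpoly.roots.erase r).map Complex.re).sum = (n : ℝ) := by
        rw [← heq, hresum, ← Multiset.cons_erase hr, Multiset.map_cons, Multiset.sum_cons]
        rw [Multiset.cons_erase hr]
      have hrest : ((M.charpoly.roots.erase r).map Complex.re).sum ≤ ((n - 1 : ℕ) : ℝ) := by
        calc ((M.charpoly.roots.erase r).map Complex.re).sum
            ≤ Multiset.card ((M.charpoly.roots.erase r).map Complex.re) • (1 : ℝ) :=
              Multiset.sum_le_card_nsmul _ _ (by
                intro x hx
                obtain ⟨r', hr', rfl⟩ := Multiset.mem_map.mp hx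
                exact hre1 r' (Multiset.mem_of_mem_erase hr'))
          _ = ((n - 1 : ℕ) : ℝ) := by
              rw [Multiset.card_map, Multiset.card_erase_of_mem hr, hcard]
              simp
      have hre_ge : (1 : ℝ) ≤ r.re := by
        have hc : ((n - 1 : ℕ) : ℝ) = (n : ℝ) - 1 := by
          rw [Nat.cast_sub hn1]; norm_num
        rw [hc] at hrest
        linarith
      have hre_eq : r.re = 1 := le_antisymm (hre1 r hr) hre_ge
      have hima : r.im = 0 := by
        have h7 : Complex.normSq r = 1 := by
          have := habs r hr
          rw [← Complex.sq_norm, this, one_pow]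
        rw [Complex.normSq_apply, hre_eq] at h7
        nlinarith
      exact Complex.ext hre_eq hima
    have hM1 : M = 1 := matEqOne hm0 M hMm hall
    have hρ : V.ρ g = 1 := by
      apply e.injective
      rw [map_one]
      exact hM1
    rw [FDRep.character, FDRep.character, map_mul, hρ, one_mul]

section Aux

lemma SCT.superchar_mem_charKer (S : SCT G) {X : Finset (G → ℂ)} (hX : X ∈ S.parts) {g : G}
    (hg : S.superchar X g = S.superchar X 1) : g ∈ charKer (S.superchar X) := by
  classical
  have hchar : ∀ χ ∈ X, ∃ V : FDRep ℂ G, V.character = χ := by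
    intro χ hχ
    obtain ⟨V, _, hV⟩ := (S.parts_cover χ).mpr ⟨X, hX, hχ⟩
    exact ⟨V, hV⟩
  choose Vf hVf using hchar
  have hone : ∀ χ (hχ : χ ∈ X), χ 1 = (((Module.finrank ℂ (Vf χ hχ) : ℝ)) : ℂ) := by
    intro χ hχ
    conv_lhs => rw [← hVf χ hχ]
    rw [FDRep.char_one]
    norm_num
  have hineq : ∀ ψ ∈ X, (ψ 1 * ψ g).re ≤ (ψ 1 * ψ 1).re := by
    intro ψ hψ
    rw [hone ψ hψ, Complex.re_ofReal_mul, Complex.re_ofReal_mul]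
    have h1 := (charKey (Vf ψ hψ) g).1
    rw [hVf ψ hψ] at h1
    refine mul_le_mul_of_nonneg_left ?_ (by positivity)
    simpa using h1
  have hsumeq : ∑ ψ ∈ X, (ψ 1 * ψ g).re = ∑ ψ ∈ X, (ψ 1 * ψ 1).re := by
    have h2 := congrArg Complex.re hg
    rw [SCT.superchar, SCT.superchar, Complex.re_sum, Complex.re_sum] at h2
    exact h2
  have main : ∀ χ ∈ X, ∀ h, χ (g * h) = χ h := by
    intro χ hχ
    by_cases hzero : Module.finrank ℂ (Vf χ hχ) = 0
    · haveI : Subsingleton (Vf χ hχ) := Module.finrank_zero_iff.mp hzero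
      intro h
      conv_lhs => rw [← hVf χ hχ]
      conv_rhs => rw [← hVf χ hχ]
      rw [FDRep.character, FDRep.character]
      congr 1
      exact Subsingleton.elim _ _
    · have hterm := (Finset.sum_eq_sum_iff_of_le hineq).mp hsumeq χ hχ
      rw [hone χ hχ, Complex.re_ofReal_mul, Complex.re_ofReal_mul] at hterm
      have hre : (χ g).re = ((Module.finrank ℂ (Vf χ hχ) : ℝ)) := by
        have hpos : (0:ℝ) < ((Module.finrank ℂ (Vf χ hχ)) : ℝ) := by
          exact_mod_cast Nat.pos_of_ne_zero hzero
        have := mul_left_cancel₀ hpos.ne' hterm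
        simpa using this
      have h3 := (charKey (Vf χ hχ) g).2
      rw [hVf χ hχ] at h3
      intro h
      exact h3 hre h
  intro h
  show S.superchar X (g * h) = S.superchar X h
  rw [SCT.superchar]
  exact Finset.sum_congr rfl fun χ hχ => by rw [main χ hχ h]

lemma mem_charKer_iff (f : G → ℂ) (x : G) : x ∈ charKer f ↔ ∀ h, f (x * h) = f h :=
  Iff.rfl

end Aux

/-- `g ∈ U(S|N)` iff every `S`-character `χ` with `g ∉ ker χ`
vanishes on `G ∖ N`. -/
theorem mem_U_iff (S : SCT G) (N : Subgroup G) (hN : S.IsNormal N) (g : G) :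
    g ∈ S.U N ↔ ∀ f ∈ S.Irr, g ∉ charKer f → ∀ h ∉ N, f h = 0 := by
  constructor
  · intro hg f hf hker h hh
    by_contra hfh
    have hle : S.U N ≤ charKer f := by
      refine iSup_le fun H => iSup_le fun hH => ?_
      by_contra hcon
      exact hh (hH.2 (Subgroup.subset_closure ⟨f, ⟨hf, hcon⟩, hfh⟩))
    exact hker (hle hg)
  · intro hg
    set H : Subgroup G := ⨅ (f : G → ℂ) (_ : f ∈ S.Irr ∧ g ∈ charKer f), charKer f with hH
    have hgH : g ∈ H := by
      rw [hH]
      simp only [Subgroup.mem_iInf]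
      intro f hf
      exact hf.2
    have hnormal : S.IsNormal H := by
      intro x hx k hk
      rw [SetLike.mem_coe, hH, Subgroup.mem_iInf]
      intro f
      rw [Subgroup.mem_iInf]
      intro hf
      have hxf : x ∈ charKer f := by
        rw [hH, Subgroup.mem_iInf] at hx
        exact Subgroup.mem_iInf.mp (hx f) hf
      obtain ⟨X, hX, rfl⟩ := hf.1
      apply S.superchar_mem_charKer hX
      have h1 : S.superchar X x = S.superchar X 1 := by
        have h2 := (mem_charKer_iff _ _).mp hxf 1
        rwa [mul_one] at h2
      have h3 : S.superchar X k = S.superchar X x := S.const X hX x k hk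
      rw [h3, h1]
    have hVle : S.V H ≤ N := by
      refine (Subgroup.closure_le _).mpr ?_
      rintro x ⟨f, ⟨hfIrr, hfH⟩, hfx⟩
      by_contra hxN
      have hgker : g ∉ charKer f := by
        intro hgk
        exact hfH (by
          rw [hH]
          exact iInf_le_of_le f (iInf_le _ ⟨hfIrr, hgk⟩))
      exact hfx (hg f hfIrr hgker x hxN)
    have hfin : H ≤ S.U N :=
      le_iSup₂ (f := fun (K : Subgroup G) (_ : S.IsNormal K ∧ S.V K ≤ N) => K) H ⟨hnormal, hVle⟩
    exact hfin hgH
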